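/- Let μ be a Borel measure on (0,∞) with ∫_{(0,∞)} min(x, x²) μ(dx) < ∞, γ ≥ 0, and ψ₀(θ) = γ²θ² + ∫_{(0,∞)} (e^{−θx} − 1 + θx) μ(dx). Let t > 0, λ ≥ 0, and let K : [0,t] → ℝ be continuous. Then there exists a unique differentiable function v : [0,t] → [0,λ] with v(t) = λ and v'(s) = e^{K(s)} ψ₀(v(s) e^{−K(s)}) for all s ∈ [0,t]; moreover this v is nondecreasing on [0,t]. -/

import Mathlib

open Real MeasureTheory Set

lemma gaux_key {a b : ℝ} (hb : 0 ≤ b) (hba : b ≤ a) :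
    0 ≤ (Real.exp (-a) - 1 + a) - (Real.exp (-b) - 1 + b) ∧
    (Real.exp (-a) - 1 + a) - (Real.exp (-b) - 1 + b) ≤ (1 - Real.exp (-a)) * (a - b) := by
  have h1 : Real.exp (-a) = Real.exp (-b) * Real.exp (-(a - b)) := by
    rw [← Real.exp_add]; ring_nf
  have h1' : Real.exp (-b) = Real.exp (-a) * Real.exp (a - b) := by
    rw [← Real.exp_add]; ring_nf
  have h2 := Real.add_one_le_exp (-(a - b))
  have h2' := Real.add_one_le_exp (a - b)
  have h3 : Real.exp (-b) ≤ 1 := by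
    rw [show (1:ℝ) = Real.exp 0 by simp]
    exact Real.exp_le_exp.2 (by linarith)
  have h4 := Real.exp_pos (-b)
  have h5 := Real.exp_pos (-a)
  constructor
  · nlinarith
  · nlinarith

lemma gpt {M θ₁ θ₂ x : ℝ} (hθ₂ : 0 ≤ θ₂) (h12 : θ₂ ≤ θ₁) (hM : θ₁ ≤ M) (hx : 0 < x) :
    0 ≤ (Real.exp (-(θ₁ * x)) - 1 + θ₁ * x) - (Real.exp (-(θ₂ * x)) - 1 + θ₂ * x) ∧
    (Real.exp (-(θ₁ * x)) - 1 + θ₁ * x) - (Real.exp (-(θ₂ * x)) - 1 + θ₂ * x)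
      ≤ (θ₁ - θ₂) * (max 1 M * min x (x ^ 2)) := by
  have hb : 0 ≤ θ₂ * x := mul_nonneg hθ₂ hx.le
  have hba : θ₂ * x ≤ θ₁ * x := mul_le_mul_of_nonneg_right h12 hx.le
  obtain ⟨hk1, hk2⟩ := gaux_key hb hba
  refine ⟨hk1, hk2.trans ?_⟩
  -- (1 - exp(-(θ₁x))) * (θ₁x - θ₂x) ≤ (θ₁-θ₂) * (max 1 M * min x x²)
  have he1 : 1 - Real.exp (-(θ₁ * x)) ≤ 1 := by
    have := Real.exp_pos (-(θ₁ * x)); linarith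
  have he2 : 1 - Real.exp (-(θ₁ * x)) ≤ θ₁ * x := by
    have := Real.add_one_le_exp (-(θ₁ * x)); linarith
  have he0 : 0 ≤ 1 - Real.exp (-(θ₁ * x)) := by
    have : Real.exp (-(θ₁ * x)) ≤ 1 := by
      rw [show (1:ℝ) = Real.exp 0 by simp]
      exact Real.exp_le_exp.2 (by nlinarith)
    linarith
  have hmax1 : (1:ℝ) ≤ max 1 M := le_max_left _ _
  have hmaxM : M ≤ max 1 M := le_max_right _ _
  rcases le_total x 1 with hx1 | hx1
  · have hmin : min x (x ^ 2) = x ^ 2 := min_eq_right (by nlinarith)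
    rw [hmin]
    have hh : 1 - Real.exp (-(θ₁ * x)) ≤ max 1 M * x :=
      he2.trans (by nlinarith)
    nlinarith [mul_le_mul_of_nonneg_right hh (mul_nonneg (sub_nonneg.2 h12) hx.le)]
  · have hmin : min x (x ^ 2) = x := min_eq_left (by nlinarith)
    rw [hmin]
    nlinarith [mul_le_mul_of_nonneg_right he1 (sub_nonneg.2 hba)]

lemma psi_key (μ : Measure ℝ) (γ : ℝ)
    (hμ : IntegrableOn (fun x => min x (x ^ 2)) (Set.Ioi 0) μ)
    (ψ₀ : ℝ → ℝ)
    (hψ : ∀ θ, ψ₀ θ = γ ^ 2 * θ ^ 2 +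
      ∫ x in Set.Ioi (0:ℝ), (Real.exp (-θ * x) - 1 + θ * x) ∂μ)
    (M : ℝ) {θ₁ θ₂ : ℝ} (hθ₂ : 0 ≤ θ₂) (h12 : θ₂ ≤ θ₁) (hM : θ₁ ≤ M) :
    0 ≤ ψ₀ θ₁ - ψ₀ θ₂ ∧ ψ₀ θ₁ - ψ₀ θ₂ ≤
      (2 * γ ^ 2 * M + max 1 M * (∫ x in Set.Ioi (0:ℝ), min x (x ^ 2) ∂μ)) * (θ₁ - θ₂) := by
  have hMnn : 0 ≤ M := le_trans (hθ₂.trans h12) hM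
  -- integrability of the integrand for any θ ∈ [0, M]
  have hint : ∀ θ, 0 ≤ θ → θ ≤ M →
      IntegrableOn (fun x => Real.exp (-θ * x) - 1 + θ * x) (Set.Ioi 0) μ := by
    intro θ h0 hθM
    apply Integrable.mono' ((hμ.const_mul (θ * max 1 M)))
    · exact (Continuous.aestronglyMeasurable (by continuity))
    · rw [ae_restrict_iff' measurableSet_Ioi]
      refine ae_of_all _ fun x hx => ?_
      have h := gpt (le_refl (0:ℝ)) h0 hθM (mem_Ioi.1 hx)
      simp only [zero_mul, neg_zero, Real.exp_zero, ← neg_mul] at h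
      rw [Real.norm_eq_abs, abs_of_nonneg (by linarith [h.1])]
      calc Real.exp (-θ * x) - 1 + θ * x
          = (Real.exp (-(θ * x)) - 1 + θ * x) - (Real.exp (-(0 * x)) - 1 + 0 * x) := by
            simp [neg_mul]
        _ ≤ (θ - 0) * (max 1 M * min x (x ^ 2)) := by
            have := gpt (le_refl (0:ℝ)) h0 hθM (mem_Ioi.1 hx)
            exact this.2
        _ = θ * max 1 M * min x (x ^ 2) := by ring
  have hi1 := hint θ₁ (hθ₂.trans h12) hM
  have hi2 := hint θ₂ hθ₂ (h12.trans hM)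
  have hsub : ψ₀ θ₁ - ψ₀ θ₂ = γ ^ 2 * (θ₁ ^ 2 - θ₂ ^ 2) +
      ∫ x in Set.Ioi (0:ℝ),
        ((Real.exp (-θ₁ * x) - 1 + θ₁ * x) - (Real.exp (-θ₂ * x) - 1 + θ₂ * x)) ∂μ := by
    rw [hψ θ₁, hψ θ₂, integral_sub hi1 hi2]; ring
  constructor
  · rw [hsub]
    have h2 : 0 ≤ ∫ x in Set.Ioi (0:ℝ),
        ((Real.exp (-θ₁ * x) - 1 + θ₁ * x) - (Real.exp (-θ₂ * x) - 1 + θ₂ * x)) ∂μ := by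
      refine setIntegral_nonneg measurableSet_Ioi fun x hx => ?_
      have := (gpt hθ₂ h12 hM (mem_Ioi.1 hx)).1
      simp only [neg_mul] at *
      linarith
    have hsq : θ₂ ^ 2 ≤ θ₁ ^ 2 := by nlinarith
    have := mul_nonneg (sq_nonneg γ) (sub_nonneg.2 hsq)
    linarith
  · rw [hsub]
    have h2 : (∫ x in Set.Ioi (0:ℝ),
        ((Real.exp (-θ₁ * x) - 1 + θ₁ * x) - (Real.exp (-θ₂ * x) - 1 + θ₂ * x)) ∂μ) ≤
        ∫ x in Set.Ioi (0:ℝ), (θ₁ - θ₂) * (max 1 M * min x (x ^ 2)) ∂μ := by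
      refine setIntegral_mono_on (hi1.sub hi2) ?_ measurableSet_Ioi fun x hx => ?_
      · have := hμ.const_mul ((θ₁ - θ₂) * max 1 M)
        simp only [mul_assoc] at this
        exact this
      · have := (gpt hθ₂ h12 hM (mem_Ioi.1 hx)).2
        simp only [neg_mul] at *
        linarith
    rw [integral_const_mul, integral_const_mul] at h2
    have hA : (θ₁ + θ₂) * (θ₁ - θ₂) ≤ 2 * M * (θ₁ - θ₂) :=
      mul_le_mul_of_nonneg_right (by linarith) (by linarith)
    have hB : γ ^ 2 * ((θ₁ + θ₂) * (θ₁ - θ₂)) ≤ γ ^ 2 * (2 * M * (θ₁ - θ₂)) :=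
      mul_le_mul_of_nonneg_left hA (sq_nonneg γ)
    nlinarith [h2, hB]

theorem stmt_8 (μ : Measure ℝ) (γ : ℝ) (hγ : 0 ≤ γ)
    (hμ : IntegrableOn (fun x => min x (x ^ 2)) (Set.Ioi 0) μ)
    (ψ₀ : ℝ → ℝ)
    (hψ : ∀ θ, ψ₀ θ = γ ^ 2 * θ ^ 2 +
      ∫ x in Set.Ioi (0:ℝ), (Real.exp (-θ * x) - 1 + θ * x) ∂μ)
    (t lam : ℝ) (ht : 0 < t) (hlam : 0 ≤ lam)
    (K : ℝ → ℝ) (hK : ContinuousOn K (Set.Icc 0 t)) :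
    ∃ v : ℝ → ℝ,
      ((∀ s ∈ Set.Icc (0:ℝ) t, v s ∈ Set.Icc 0 lam) ∧ v t = lam ∧
        (∀ s ∈ Set.Icc (0:ℝ) t,
          HasDerivWithinAt v (Real.exp (K s) * ψ₀ (v s * Real.exp (-K s)))
            (Set.Icc 0 t) s) ∧
        MonotoneOn v (Set.Icc 0 t)) ∧
      ∀ w : ℝ → ℝ,
        ((∀ s ∈ Set.Icc (0:ℝ) t, w s ∈ Set.Icc 0 lam) ∧ w t = lam ∧
          (∀ s ∈ Set.Icc (0:ℝ) t,
            HasDerivWithinAt w (Real.exp (K s) * ψ₀ (w s * Real.exp (-K s)))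
              (Set.Icc 0 t) s)) →
        Set.EqOn v w (Set.Icc 0 t) := by
  have hψ0 : ψ₀ 0 = 0 := by rw [hψ 0]; simp
  set Cμ := ∫ x in Set.Ioi (0:ℝ), min x (x ^ 2) ∂μ with hCμdef
  have hCμ : 0 ≤ Cμ := setIntegral_nonneg measurableSet_Ioi fun x hx => by
    have hx' : (0:ℝ) < x := hx
    have : (0:ℝ) ≤ x ^ 2 := sq_nonneg x
    exact le_min hx'.le this
  -- bound for K on [0, t]
  obtain ⟨b, hb⟩ := isCompact_Icc.exists_bound_of_continuousOn hK
  -- extension of K to ℝ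
  set Kc : ℝ → ℝ := fun s => K (max 0 (min s t)) with hKcdef
  have hmem' : ∀ s : ℝ, max 0 (min s t) ∈ Set.Icc 0 t := fun s =>
    ⟨le_max_left _ _, max_le ht.le (min_le_right _ _)⟩
  have hKc_cont : Continuous Kc :=
    hK.comp_continuous (continuous_const.max (continuous_id.min continuous_const)) hmem'
  have hKc_eq : ∀ s ∈ Set.Icc (0:ℝ) t, Kc s = K s := fun s hs => by
    simp only [hKcdef, min_eq_left hs.2, max_eq_right hs.1]
  have hKc_bd : ∀ s, |Kc s| ≤ b := fun s => by
    simpa [Real.norm_eq_abs] using hb _ (hmem' s)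
  set eB := Real.exp b with heBdef
  have heB : 0 < eB := Real.exp_pos b
  have hexp1 : ∀ s, Real.exp (Kc s) ≤ eB := fun s =>
    Real.exp_le_exp.2 (le_trans (le_abs_self _) (hKc_bd s))
  have hexp2 : ∀ s, Real.exp (-Kc s) ≤ eB := fun s =>
    Real.exp_le_exp.2 (le_trans (neg_le_abs _) (hKc_bd s))
  set M := lam * eB with hMdef
  have hM : 0 ≤ M := mul_nonneg hlam heB.le
  set L := 2 * γ ^ 2 * M + max 1 M * Cμ with hLdef
  have hL : 0 ≤ L := by
    have h1 : (0:ℝ) ≤ max 1 M := le_trans zero_le_one (le_max_left _ _)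
    have : (0:ℝ) ≤ 2 * γ ^ 2 * M := by positivity
    nlinarith
  have key : ∀ θ₁ θ₂ : ℝ, 0 ≤ θ₂ → θ₂ ≤ θ₁ → θ₁ ≤ M →
      0 ≤ ψ₀ θ₁ - ψ₀ θ₂ ∧ ψ₀ θ₁ - ψ₀ θ₂ ≤ L * (θ₁ - θ₂) := fun θ₁ θ₂ h1 h2 h3 =>
    psi_key μ γ hμ ψ₀ hψ M h1 h2 h3
  set cl : ℝ → ℝ := fun y => max 0 (min y lam) with hcldef
  set F : ℝ → ℝ → ℝ := fun s y => Real.exp (Kc s) * ψ₀ (cl y * Real.exp (-Kc s)) with hFdef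
  have hcl_mem : ∀ y, cl y ∈ Set.Icc 0 lam := fun y =>
    ⟨le_max_left _ _, max_le hlam (min_le_right _ _)⟩
  have hθ_mem : ∀ s y, cl y * Real.exp (-Kc s) ∈ Set.Icc 0 M := fun s y =>
    ⟨mul_nonneg (hcl_mem y).1 (Real.exp_pos _).le,
     mul_le_mul (hcl_mem y).2 (hexp2 s) (Real.exp_pos _).le hlam⟩
  have hψ_pair : ∀ θ, θ ∈ Set.Icc 0 M → 0 ≤ ψ₀ θ ∧ ψ₀ θ ≤ L * θ := by
    intro θ hθ
    have h := key θ 0 le_rfl hθ.1 hθ.2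
    rw [hψ0] at h
    exact ⟨by linarith [h.1], by linarith [h.2]⟩
  have hψlip : ∀ θ₁ θ₂, θ₁ ∈ Set.Icc 0 M → θ₂ ∈ Set.Icc 0 M →
      |ψ₀ θ₁ - ψ₀ θ₂| ≤ L * |θ₁ - θ₂| := by
    intro θ₁ θ₂ h1 h2
    rcases le_total θ₂ θ₁ with h | h
    · obtain ⟨ha, hb'⟩ := key θ₁ θ₂ h2.1 h h1.2
      rw [abs_of_nonneg ha, abs_of_nonneg (by linarith)]
      exact hb'
    · obtain ⟨ha, hb'⟩ := key θ₂ θ₁ h1.1 h h2.2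
      rw [abs_sub_comm, abs_sub_comm θ₁ θ₂, abs_of_nonneg ha, abs_of_nonneg (by linarith)]
      exact hb'
  have hFnonneg : ∀ s y, 0 ≤ F s y := fun s y =>
    mul_nonneg (Real.exp_pos _).le (hψ_pair _ (hθ_mem s y)).1
  set C := eB * (L * M) with hCdef
  have hFbound : ∀ s y, |F s y| ≤ C := by
    intro s y
    rw [abs_of_nonneg (hFnonneg s y)]
    have h1 := hψ_pair _ (hθ_mem s y)
    have h2 : ψ₀ (cl y * Real.exp (-Kc s)) ≤ L * M :=
      h1.2.trans (mul_le_mul_of_nonneg_left (hθ_mem s y).2 hL)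
    exact mul_le_mul (hexp1 s) h2 h1.1 heB.le
  have hcl_lip : ∀ y₁ y₂, |cl y₁ - cl y₂| ≤ |y₁ - y₂| := by
    intro y₁ y₂
    have h1 : |cl y₁ - cl y₂| ≤ |min y₁ lam - min y₂ lam| := by
      rw [hcldef]
      simp only [max_comm (0:ℝ)]
      exact abs_max_sub_max_le_abs _ _ _
    refine h1.trans ?_
    have := abs_min_sub_min_le_max y₁ lam y₂ lam
    simpa using this
  have hFlip : ∀ s y₁ y₂, |F s y₁ - F s y₂| ≤ L * |y₁ - y₂| := by
    intro s y₁ y₂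
    have hee : Real.exp (Kc s) * Real.exp (-Kc s) = 1 := by
      rw [← Real.exp_add]; simp
    have h1 : F s y₁ - F s y₂ =
        Real.exp (Kc s) * (ψ₀ (cl y₁ * Real.exp (-Kc s)) - ψ₀ (cl y₂ * Real.exp (-Kc s))) := by
      rw [hFdef]; ring
    rw [h1, abs_mul, abs_of_nonneg (Real.exp_pos (Kc s)).le]
    have h2 := hψlip _ _ (hθ_mem s y₁) (hθ_mem s y₂)
    have h3 : |cl y₁ * Real.exp (-Kc s) - cl y₂ * Real.exp (-Kc s)| =
        |cl y₁ - cl y₂| * Real.exp (-Kc s) := by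
      rw [← sub_mul, abs_mul, abs_of_nonneg (Real.exp_pos _).le]
    calc Real.exp (Kc s) * |ψ₀ (cl y₁ * Real.exp (-Kc s)) - ψ₀ (cl y₂ * Real.exp (-Kc s))|
        ≤ Real.exp (Kc s) * (L * (|cl y₁ - cl y₂| * Real.exp (-Kc s))) := by
          rw [← h3]
          exact mul_le_mul_of_nonneg_left h2 (Real.exp_pos _).le
      _ = L * |cl y₁ - cl y₂| * (Real.exp (Kc s) * Real.exp (-Kc s)) := by ring
      _ = L * |cl y₁ - cl y₂| := by rw [hee, mul_one]
      _ ≤ L * |y₁ - y₂| := mul_le_mul_of_nonneg_left (hcl_lip y₁ y₂) hL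
  have hψcont : ContinuousOn ψ₀ (Set.Icc 0 M) := by
    have : LipschitzOnWith L.toNNReal ψ₀ (Set.Icc 0 M) := by
      rw [lipschitzOnWith_iff_dist_le_mul]
      intro x hx y hy
      rw [Real.dist_eq, Real.dist_eq, Real.coe_toNNReal _ hL]
      exact hψlip x y hx hy
    exact this.continuousOn
  have hFcont : ∀ y, Continuous fun s => F s y := by
    intro y
    refine (Real.continuous_exp.comp hKc_cont).mul ?_
    refine hψcont.comp_continuous ?_ (fun s => hθ_mem s y)
    exact continuous_const.mul (Real.continuous_exp.comp hKc_cont.neg)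
  have hC : 0 ≤ C := (abs_nonneg _).trans (hFbound 0 0)
  set R := C * t + 1 with hRdef
  have hFlipW : ∀ s, LipschitzWith L.toNNReal (F s) := by
    intro s
    apply LipschitzWith.of_dist_le_mul
    intro y₁ y₂
    rw [Real.dist_eq, Real.dist_eq, Real.coe_toNNReal _ hL]
    exact hFlip s y₁ y₂
  have hR : 0 ≤ R := by rw [hRdef]; positivity
  have hpl : IsPicardLindelof F (tmin := 0) (tmax := t) ⟨t, ⟨ht.le, le_rfl⟩⟩ lam
      R.toNNReal 0 C.toNNReal L.toNNReal :=
    { lipschitzOnWith := fun s _ => (lipschitzOnWith_univ.mpr (hFlipW s)).mono (Set.subset_univ _)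
      continuousOn := fun y _ => (hFcont y).continuousOn
      norm_le := fun s _ y _ => by
        rw [Real.norm_eq_abs, Real.coe_toNNReal _ hC]; exact hFbound s y
      mul_max_le := by
        rw [Real.coe_toNNReal _ hC, Real.coe_toNNReal _ hR, NNReal.coe_zero, sub_zero]
        show C * max (t - t) t ≤ R - 0
        rw [sub_self, sub_zero, max_eq_right ht.le]
        linarith }
  obtain ⟨u, hut, hu⟩ := hpl.exists_eq_forall_mem_Icc_hasDerivWithinAt₀
  replace hut : u t = lam := hut
  have hucont : ContinuousOn u (Set.Icc 0 t) := fun s hs => (hu s hs).continuousWithinAt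
  have humono : MonotoneOn u (Set.Icc 0 t) := by
    apply monotoneOn_of_deriv_nonneg (convex_Icc 0 t) hucont
    · intro s hs
      rw [interior_Icc] at hs
      exact ((hu s (Ioo_subset_Icc_self hs)).hasDerivAt
        (Icc_mem_nhds hs.1 hs.2)).differentiableAt.differentiableWithinAt
    · intro s hs
      rw [interior_Icc] at hs
      rw [((hu s (Ioo_subset_Icc_self hs)).hasDerivAt (Icc_mem_nhds hs.1 hs.2)).deriv]
      exact hFnonneg _ _
  have hup : ∀ s ∈ Set.Icc (0:ℝ) t, u s ≤ lam := fun s hs =>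
    hut ▸ humono hs (right_mem_Icc.2 ht.le) hs.2
  have hF0 : ∀ s y, y ≤ 0 → F s y = 0 := by
    intro s y hy
    have h1 : cl y = 0 := max_eq_left ((min_le_left y lam).trans hy)
    rw [hFdef]
    simp only [h1, zero_mul, hψ0, mul_zero]
  have hlow : ∀ s ∈ Set.Icc (0:ℝ) t, 0 ≤ u s := by
    by_contra hcon
    push_neg at hcon
    obtain ⟨s₀, hs₀, hus₀⟩ := hcon
    set T := {s ∈ Set.Icc s₀ t | u s ≤ 0} with hTdef
    have hTsub : Set.Icc s₀ t ⊆ Set.Icc 0 t := Set.Icc_subset_Icc hs₀.1 le_rfl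
    have hTclosed : IsClosed T := by
      have : T = Set.Icc s₀ t ∩ u ⁻¹' (Set.Iic 0) := by ext x; simp [hTdef]
      rw [this]
      exact (hucont.mono hTsub).preimage_isClosed_of_isClosed isClosed_Icc isClosed_Iic
    have hTne : T.Nonempty := ⟨s₀, ⟨le_rfl, hs₀.2⟩, hus₀.le⟩
    have hTbdd : BddAbove T := ⟨t, fun s hs => hs.1.2⟩
    set c := sSup T with hcdef
    have hcT : c ∈ T := hTclosed.csSup_mem hTne hTbdd
    have hs₀c : s₀ ≤ c := le_csSup hTbdd ⟨⟨le_rfl, hs₀.2⟩, hus₀.le⟩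
    have hct : c ≤ t := hcT.1.2
    have hcI : c ∈ Set.Icc (0:ℝ) t := ⟨hs₀.1.trans hs₀c, hct⟩
    have hneg : ∀ r ∈ Set.Icc s₀ c, u r ≤ 0 := fun r hr =>
      (humono ⟨hs₀.1.trans hr.1, hr.2.trans hct⟩ hcI hr.2).trans hcT.2
    have hconst : ∀ x ∈ Set.Icc s₀ c, u x = u s₀ := by
      apply constant_of_has_deriv_right_zero
      · exact hucont.mono (Set.Icc_subset_Icc hs₀.1 hct)
      · intro x hx
        have hxI : x ∈ Set.Icc (0:ℝ) t := ⟨hs₀.1.trans hx.1, (hx.2.le.trans hct)⟩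
        have hd := hu x hxI
        rw [hF0 x (u x) (hneg x ⟨hx.1, hx.2.le⟩)] at hd
        exact hd.mono_of_mem_nhdsWithin
          (Icc_mem_nhdsGE_of_mem ⟨hxI.1, lt_of_lt_of_le hx.2 hct⟩)
    have hucneg : u c < 0 := by
      rw [hconst c (right_mem_Icc.2 hs₀c)]; exact hus₀
    have hclt : c < t := by
      rcases lt_or_eq_of_le hct with h | h
      · exact h
      · exfalso; rw [h] at hucneg; rw [hut] at hucneg; linarith
    have hpos : ∀ s ∈ Set.Ioc c t, 0 ≤ u s := by
      intro s hs
      by_contra hne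
      push_neg at hne
      have : s ∈ T := ⟨⟨hs₀c.trans hs.1.le, hs.2⟩, hne.le⟩
      exact absurd (le_csSup hTbdd this) (not_le.2 hs.1)
    have htend : Filter.Tendsto u (nhdsWithin c (Set.Ioc c t)) (nhds (u c)) :=
      (hucont c hcI).mono (fun x hx => ⟨hcI.1.trans hx.1.le, hx.2⟩)
    have hNB : (nhdsWithin c (Set.Ioc c t)).NeBot := by
      rw [← mem_closure_iff_nhdsWithin_neBot, closure_Ioc hclt.ne]
      exact ⟨le_rfl, hclt.le⟩
    have : 0 ≤ u c := ge_of_tendsto htend (eventually_nhdsWithin_of_forall hpos)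
    linarith
  -- rewrite the ODE on [0,t]
  have hclu : ∀ s ∈ Set.Icc (0:ℝ) t, cl (u s) = u s := by
    intro s hs
    rw [hcldef]
    simp only [min_eq_left (hup s hs), max_eq_right (hlow s hs)]
  have hFeq : ∀ (g : ℝ → ℝ), (∀ s ∈ Set.Icc (0:ℝ) t, g s ∈ Set.Icc 0 lam) →
      ∀ s ∈ Set.Icc (0:ℝ) t,
      F s (g s) = Real.exp (K s) * ψ₀ (g s * Real.exp (-K s)) := by
    intro g hg s hs
    have h1 : cl (g s) = g s := by
      rw [hcldef]
      simp only [min_eq_left (hg s hs).2, max_eq_right (hg s hs).1]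
    rw [hFdef]
    simp only [h1, hKc_eq s hs]
  have huode : ∀ s ∈ Set.Icc (0:ℝ) t,
      HasDerivWithinAt u (Real.exp (K s) * ψ₀ (u s * Real.exp (-K s))) (Set.Icc 0 t) s := by
    intro s hs
    have h := hu s hs
    rwa [hFeq u (fun r hr => ⟨hlow r hr, hup r hr⟩) s hs] at h
  refine ⟨u, ⟨fun s hs => ⟨hlow s hs, hup s hs⟩, hut, huode, humono⟩, ?_⟩
  rintro w ⟨hwmem, hwt, hwode⟩
  have hwF : ∀ s ∈ Set.Icc (0:ℝ) t, HasDerivWithinAt w (F s (w s)) (Set.Icc 0 t) s := by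
    intro s hs
    have h := hwode s hs
    rwa [← hFeq w hwmem s hs] at h
  have hwcont : ContinuousOn w (Set.Icc 0 t) := fun s hs => (hwF s hs).continuousWithinAt
  have hIic : ∀ s ∈ Set.Ioc (0:ℝ) t, Set.Icc (0:ℝ) t ∈ nhdsWithin s (Set.Iic s) :=
    fun s hs => Icc_mem_nhdsLE_of_mem ⟨hs.1, hs.2⟩
  exact ODE_solution_unique_of_mem_Icc_left
    (fun s _ => lipschitzOnWith_univ.mpr (hFlipW s))
    hucont
    (fun s hs => (hu s (Set.Ioc_subset_Icc_self hs)).mono_of_mem_nhdsWithin (hIic s hs))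
    (fun s _ => Set.mem_univ _)
    hwcont
    (fun s hs => (hwF s (Set.Ioc_subset_Icc_self hs)).mono_of_mem_nhdsWithin (hIic s hs))
    (fun s _ => Set.mem_univ _)
    (hut.trans hwt.symm)
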